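/- Let P be a contraction on a Hilbert space H and A_* the strong limit of {P^n P^{*n}}. Then the map A_*^{1/2} x ↦ A_*^{1/2} P^* x extends to a well-defined isometry on the closure of the range of A_* (equivalently, ‖A_*^{1/2} P^* x‖ = ‖A_*^{1/2} x‖ for all x ∈ H). -/

import Mathlib

open ContinuousLinearMap Filter Topology

/-- If `P` is a contraction, `A_*` the strong limit of `P^n P^{*n}`, and `S = A_*^{1/2}`
its positive square root, then `‖A_*^{1/2} P^* x‖ = ‖A_*^{1/2} x‖` for all `x`, so that
`A_*^{1/2} x ↦ A_*^{1/2} P^* x` extends to an isometry of the closure of the range of `A_*`. -/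
theorem stmt_3 {H : Type*} [NormedAddCommGroup H] [InnerProductSpace ℂ H] [CompleteSpace H]
    (P A S : H →L[ℂ] H) (hP : ‖P‖ ≤ 1)
    (hA : ∀ x : H, Tendsto (fun n : ℕ => (P ^ n * (adjoint P) ^ n) x) atTop (𝓝 (A x)))
    (hSpos : S.IsPositive) (hS : S ^ 2 = A) :
    ∀ x : H, ‖S (adjoint P x)‖ = ‖S x‖ := by
  have hSA : IsSelfAdjoint S := hSpos.isSelfAdjoint
  -- P A P* = A pointwise
  have hPAP : ∀ y : H, P (A (adjoint P y)) = A y := by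
    intro y
    have h1 : Tendsto (fun n : ℕ => P ((P ^ n * (adjoint P) ^ n) (adjoint P y)))
        atTop (𝓝 (P (A (adjoint P y)))) :=
      (P.continuous.tendsto _).comp (hA (adjoint P y))
    have h2 : Tendsto (fun n : ℕ => (P ^ (n + 1) * (adjoint P) ^ (n + 1)) y)
        atTop (𝓝 (A y)) := (hA y).comp (tendsto_add_atTop_nat 1)
    have heq : (fun n : ℕ => P ((P ^ n * (adjoint P) ^ n) (adjoint P y)))
        = fun n : ℕ => (P ^ (n + 1) * (adjoint P) ^ (n + 1)) y := by
      funext n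
      simp [pow_succ' P n, pow_succ (adjoint P) n, mul_apply]
    rw [heq] at h1
    exact tendsto_nhds_unique h1 h2
  -- inner product identity:   ⟪S y, S y⟫ = ⟪y, A y⟫
  have hinner : ∀ y : H, (inner ℂ (S y) (S y) : ℂ) = inner ℂ y (A y) := by
    intro y
    calc (inner ℂ (S y) (S y) : ℂ) = inner ℂ (adjoint S y) (S y) := by rw [hSA.adjoint_eq]
      _ = inner ℂ y (S (S y)) := adjoint_inner_left S (S y) y
      _ = inner ℂ y (A y) := by rw [← hS]; simp [pow_two, mul_apply]
  intro x
  have key : (inner ℂ (S (adjoint P x)) (S (adjoint P x)) : ℂ) = inner ℂ (S x) (S x) := by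
    rw [hinner, hinner]
    calc (inner ℂ (adjoint P x) (A (adjoint P x)) : ℂ)
        = inner ℂ x (P (A (adjoint P x))) := adjoint_inner_left P _ x
      _ = inner ℂ x (A x) := by rw [hPAP]
  rw [inner_self_eq_norm_sq_to_K, inner_self_eq_norm_sq_to_K] at key
  have h3 : ‖S (adjoint P x)‖ ^ 2 = ‖S x‖ ^ 2 := by exact_mod_cast key
  nlinarith [norm_nonneg (S (adjoint P x)), norm_nonneg (S x)]
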